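/- arXiv:2312.16459 — 4 statements merged into one kernel-verified Lean document; each statement's English description precedes it below -/
import Mathlib

section
/- Let α and β be positive weight sequences with lim_{k→∞} α(k+1)/α(k) = 1 and lim_{k→∞} β(k+1)/β(k) = 1, and suppose lim_{k→∞} α(k)/(k·β(k)) = 0. Then Ker σ_{M_{α,z}*, M_{β,z}*} ∩ Ran σ_{M_{α,z}*, M_{β,z}*} = {0}; that is, if a bounded operator Y : H²_β → H²_α satisfies M_{α,z}* Y = Y M_{β,z}* and Y = M_{α,z}* X − X M_{β,z}* for some bounded operator X : H²_β → H²_α, then Y = 0. -/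
open Complex Metric Filter ComplexConjugate
open scoped Topology ENNReal

noncomputable section

/-- The `ℓ²` model of a weighted Hardy space: a vector `x` represents the holomorphic
function on the unit disk with Taylor coefficients `x k / α k`. -/
abbrev H2 : Type := lp (fun _ : ℕ => ℂ) 2

/-- Standing assumption (1.1) on a weight sequence: positivity and
`α (k+1)/α k → 1`. -/
def GoodWeight (α : ℕ → ℝ) : Prop :=
  (∀ k, 0 < α k) ∧ Tendsto (fun k => α (k + 1) / α k) atTop (𝓝 1)

/-- The `k`-th Taylor coefficient of `f` at `0`. -/
def tcoeff (f : ℂ → ℂ) (k : ℕ) : ℂ := iteratedDeriv k f 0 / (Nat.factorial k : ℂ)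

/-- `f` belongs to the weighted Hardy space `H²_α`. -/
def MemHardy (α : ℕ → ℝ) (f : ℂ → ℂ) : Prop :=
  DifferentiableOn ℂ f (ball (0 : ℂ) 1) ∧
    Summable fun k => ‖tcoeff f k‖ ^ 2 * α k ^ 2

/-- The holomorphic function on the unit disk represented by the model vector `x ∈ ℓ²`
(in the model of `H²_α`), namely the one with Taylor coefficients `x k / α k`. -/
def rep (α : ℕ → ℝ) (x : H2) : ℂ → ℂ :=
  fun z => ∑' k, (x k / (α k : ℂ)) * z ^ k

/-- `h` is a multiplier from `H²_α` to `H²_β`. -/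
def IsMult (α β : ℕ → ℝ) (h : ℂ → ℂ) : Prop :=
  DifferentiableOn ℂ h (ball (0 : ℂ) 1) ∧
    ∀ f, MemHardy α f → MemHardy β fun z => h z * f z

/-- `X` is (the `ℓ²` model of) the multiplication operator `M_{α,β,h} : H²_α → H²_β`. -/
def IsMultOp (α β : ℕ → ℝ) (h : ℂ → ℂ) (X : H2 →L[ℂ] H2) : Prop :=
  ∀ x : H2, ∀ z ∈ ball (0 : ℂ) 1, rep β (X x) z = h z * rep α x z

/-- The model of the direct sum `H²_α ⊕ H²_β`. -/
abbrev H2sq : Type := WithLp 2 (H2 × H2)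

def prodL : H2sq ≃L[ℂ] H2 × H2 := WithLp.prodContinuousLinearEquiv 2 ℂ H2 H2

/-- The block operator `[[A, B], [0, D]]` on `H²_α ⊕ H²_β`. -/
def blockOp (A B D : H2 →L[ℂ] H2) : H2sq →L[ℂ] H2sq :=
  (prodL.symm : (H2 × H2) →L[ℂ] H2sq).comp <|
    (((A.comp (ContinuousLinearMap.fst ℂ H2 H2) +
        B.comp (ContinuousLinearMap.snd ℂ H2 H2)).prod
      (D.comp (ContinuousLinearMap.snd ℂ H2 H2))).comp
        (prodL : H2sq →L[ℂ] H2 × H2))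

/-- The operator `T_{α,β,h} = [[M_{α,z}*, M_{α,β,h}*], [0, M_{β,z}*]]`, given the three
multiplication operators. -/
def Tabh (Mza Mzb Mh : H2 →L[ℂ] H2) : H2sq →L[ℂ] H2sq :=
  blockOp (ContinuousLinearMap.adjoint Mza) (ContinuousLinearMap.adjoint Mh)
    (ContinuousLinearMap.adjoint Mzb)

/-- Similarity of bounded operators (possibly on different spaces). -/
def OpSimilar {E F : Type*} [NormedAddCommGroup E] [NormedSpace ℂ E]
    [NormedAddCommGroup F] [NormedSpace ℂ F]
    (T : E →L[ℂ] E) (S : F →L[ℂ] F) : Prop :=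
  ∃ X : E ≃L[ℂ] F, (X : E →L[ℂ] F).comp T = S.comp (X : E →L[ℂ] F)

/-- The direct sum `⊕ T i` of a finite family of operators, acting on the
(Hilbertian) direct sum of `n` copies of `E`. -/
def dsumFam {E : Type*} [NormedAddCommGroup E] [NormedSpace ℂ E] (n : ℕ)
    (T : Fin n → (E →L[ℂ] E)) :
    PiLp 2 (fun _ : Fin n => E) →L[ℂ] PiLp 2 (fun _ : Fin n => E) :=
  (((PiLp.continuousLinearEquiv 2 ℂ (fun _ : Fin n => E)).symm :
      (∀ _ : Fin n, E) →L[ℂ] PiLp 2 (fun _ : Fin n => E)).comp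
    (ContinuousLinearMap.pi fun i => (T i).comp (ContinuousLinearMap.proj i))).comp
      ((PiLp.continuousLinearEquiv 2 ℂ (fun _ : Fin n => E)) :
        PiLp 2 (fun _ : Fin n => E) →L[ℂ] (∀ _ : Fin n, E))

/-- The direct sum of `n` copies of an operator. -/
def dsum {E : Type*} [NormedAddCommGroup E] [NormedSpace ℂ E] (n : ℕ) (T : E →L[ℂ] E) :
    PiLp 2 (fun _ : Fin n => E) →L[ℂ] PiLp 2 (fun _ : Fin n => E) :=
  dsumFam n fun _ => T

/-- The value `B(T)` of the (Riesz) functional calculus of `T` at the finite Blaschke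
product `B(z) = e^{iθ} ∏ⱼ (z - a j)/(1 - conj (a j) z)`; since every pole of `B` lies
outside the closed unit disk (which contains `σ(T)`), this is given algebraically by
`e^{iθ} ∏ⱼ (T - a j) (1 - conj (a j) T)⁻¹`. -/
def bCalc {E : Type*} [NormedAddCommGroup E] [NormedSpace ℂ E] {n : ℕ}
    (θ : ℝ) (a : Fin n → ℂ) (T : E →L[ℂ] E) : E →L[ℂ] E :=
  Complex.exp (θ * Complex.I) •
    (List.ofFn fun j =>
      (T - a j • (1 : E →L[ℂ] E)) * Ring.inverse (1 - conj (a j) • T)).prod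

/-- `B(T)` is similar to the direct sum of `n` copies of `T`, for every finite Blaschke
product `B` of every order `n ≥ 1`. -/
def BlaschkeSimilar {E : Type*} [NormedAddCommGroup E] [NormedSpace ℂ E]
    (T : E →L[ℂ] E) : Prop :=
  ∀ (n : ℕ), 1 ≤ n → ∀ (θ : ℝ) (a : Fin n → ℂ), (∀ j, a j ∈ ball (0 : ℂ) 1) →
    OpSimilar (bCalc θ a T) (dsum n T)

/-- `T` is weakly homogeneous: `σ(T) ⊆ 𝔻̄` and `φ(T) ∼ T` for every automorphism `φ`
of the unit disk. -/
def WeaklyHomogeneous {E : Type*} [NormedAddCommGroup E] [NormedSpace ℂ E]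
    (T : E →L[ℂ] E) : Prop :=
  spectrum ℂ T ⊆ closedBall (0 : ℂ) 1 ∧
    ∀ (θ : ℝ), ∀ a ∈ ball (0 : ℂ) 1, OpSimilar (bCalc θ (fun _ : Fin 1 => a) T) T

/-- The Möbius transformation `z ↦ e^{iθ} (z - a)/(1 - conj a · z)` of the disk. -/
def moebius (θ : ℝ) (a : ℂ) (z : ℂ) : ℂ :=
  Complex.exp (θ * Complex.I) * (z - a) / (1 - conj a * z)

/-- The weighted Hardy space `H²_α` is Möbius invariant. -/
def MoebiusInvariant (α : ℕ → ℝ) : Prop :=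
  ∀ (θ : ℝ), ∀ a ∈ ball (0 : ℂ) 1, ∀ f, MemHardy α f →
    MemHardy α fun z => f (moebius θ a z)

/-- `h ∈ Hol(𝔻̄)`: `h` is holomorphic on some open neighborhood of the closed unit
disk. -/
def HolClosedDisk (h : ℂ → ℂ) : Prop :=
  ∃ U : Set ℂ, IsOpen U ∧ closedBall (0 : ℂ) 1 ⊆ U ∧ DifferentiableOn ℂ h U

/-- `H²_α` has property A for the positive integer `n`. -/
def PropertyA (α : ℕ → ℝ) (n : ℕ) : Prop :=
  ∃ c₁ > (0 : ℝ), ∃ c₂ > (0 : ℝ), ∀ j < n, ∀ k : ℕ,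
    α k ≤ c₁ * α (j + k * n) ∧ α (j + k * n) ≤ c₂ * α k

/-- `T` is strongly irreducible: the only idempotents commuting with `T` are `0`, `1`. -/
def StronglyIrreducible {E : Type*} [NormedAddCommGroup E] [NormedSpace ℂ E]
    (T : E →L[ℂ] E) : Prop :=
  ∀ P : E →L[ℂ] E, P * P = P → P * T = T * P → P = 0 ∨ P = 1


namespace SIAux
open scoped NNReal
local notation "⟪" x ", " y "⟫" => @inner ℂ _ _ x y

/-- basis vector -/
def e (k : ℕ) : H2 := lp.single 2 k (1:ℂ)

lemma norm_e (k : ℕ) : ‖e k‖ = 1 := by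
  have := lp.norm_single (E := fun _ : ℕ => ℂ) (p := 2) (by norm_num) k (1:ℂ)
  simpa [e] using this

lemma coord_eq_inner (w : H2) (j : ℕ) : w j = ⟪e j, w⟫ := by
  simp [e, lp.inner_single_left]

lemma inv_alpha_bound {α : ℕ → ℝ} (hα : GoodWeight α) :
    ∃ C : ℝ, 0 ≤ C ∧ ∀ k, 1 / α k ≤ C * 2 ^ k := by
  obtain ⟨N, hN⟩ := eventually_atTop.mp
    (hα.2.eventually (eventually_gt_nhds (by norm_num : (1/2 : ℝ) < 1)))
  set C : ℝ := (Finset.range (N + 1)).sup' (by simp) (fun k => 1 / (α k * 2 ^ k)) with hC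
  have hmem : ∀ k ≤ N, 1 / (α k * 2 ^ k) ≤ C := fun k hk =>
    Finset.le_sup' (fun k => 1 / (α k * 2 ^ k)) (Finset.mem_range.mpr (Nat.lt_succ_of_le hk))
  have hC0 : 0 ≤ C := by
    have h0 := hα.1 0
    exact le_trans (by positivity) (hmem 0 (Nat.zero_le N))
  refine ⟨C, hC0, ?_⟩
  intro k
  induction k with
  | zero =>
      simpa using hmem 0 (Nat.zero_le N)
  | succ k ih =>
      by_cases hk : k + 1 ≤ N
      · have h0 : (0:ℝ) < α (k+1) := hα.1 (k+1)
        calc 1 / α (k+1) = 1 / (α (k+1) * 2 ^ (k+1)) * 2 ^ (k+1) := by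
              field_simp
          _ ≤ C * 2 ^ (k+1) := by gcongr; exact hmem (k+1) hk
      · have hkN : N ≤ k := by omega
        have hr := hN k hkN
        have hak : (0:ℝ) < α k := hα.1 k
        have hak1 : (0:ℝ) < α (k+1) := hα.1 (k+1)
        have h5 : 1/2 * α k < α (k+1) := (lt_div_iff₀ hak).mp hr
        have h2 : 1 / α (k+1) ≤ 2 * (1 / α k) := by
          rw [mul_one_div, div_le_div_iff₀ hak1 hak]
          nlinarith
        calc 1 / α (k+1) ≤ 2 * (1 / α k) := h2
          _ ≤ 2 * (C * 2 ^ k) := by gcongr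
          _ = C * 2 ^ (k+1) := by ring

lemma summable_rep {α : ℕ → ℝ} (hα : GoodWeight α) (x : H2) {z : ℂ} (hz : ‖z‖ < 1/2) :
    Summable fun k => (x k / (α k : ℂ)) * z ^ k := by
  obtain ⟨C, hC0, hC⟩ := inv_alpha_bound hα
  apply Summable.of_norm_bounded (g := fun k => (‖x‖ * C) * (2 * ‖z‖) ^ k)
  · apply Summable.mul_left
    apply summable_geometric_of_lt_one (by positivity)
    linarith
  · intro k
    have hak : (0:ℝ) < α k := hα.1 k
    have hxk : ‖x k‖ ≤ ‖x‖ := lp.norm_apply_le_norm (by norm_num) x k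
    have : ‖x k / (α k : ℂ) * z ^ k‖ = ‖x k‖ * (1 / α k) * ‖z‖ ^ k := by
      rw [norm_mul, norm_div, norm_pow, Complex.norm_real, Real.norm_eq_abs, abs_of_pos hak]
      ring
    rw [this]
    calc ‖x k‖ * (1 / α k) * ‖z‖ ^ k ≤ ‖x‖ * (C * 2 ^ k) * ‖z‖ ^ k := by
          gcongr; exact hC k
      _ = (‖x‖ * C) * (2 * ‖z‖) ^ k := by rw [mul_pow]; ring

lemma rep_single (α : ℕ → ℝ) (j : ℕ) (z : ℂ) :
    rep α (e j) z = z ^ j / (α j : ℂ) := by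
  unfold rep e
  rw [tsum_eq_single j (fun b hb => by
    rw [lp.single_apply_ne (E := fun _ : ℕ => ℂ) 2 j (1:ℂ) hb]; simp)]
  rw [lp.single_apply_self]
  ring

lemma rep_sub {α : ℕ → ℝ} (hα : GoodWeight α) (x y : H2) {z : ℂ} (hz : ‖z‖ < 1/2) :
    rep α (x - y) z = rep α x z - rep α y z := by
  unfold rep
  rw [← Summable.tsum_sub (summable_rep hα x hz) (summable_rep hα y hz)]
  congr 1 with k
  rw [lp.coeFn_sub, Pi.sub_apply, sub_div, sub_mul]

lemma rep_smul (α : ℕ → ℝ) (c : ℂ) (x : H2) (z : ℂ) :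
    rep α (c • x) z = c * rep α x z := by
  unfold rep
  rw [← tsum_mul_left]
  congr 1 with k
  rw [lp.coeFn_smul, Pi.smul_apply, smul_eq_mul]
  ring

lemma rep_zero_imp {α : ℕ → ℝ} (hα : GoodWeight α) (x : H2)
    (h : ∀ z ∈ ball (0:ℂ) (1/2), rep α x z = 0) : x = 0 := by
  obtain ⟨C, hC0, hC⟩ := inv_alpha_bound hα
  set c : ℕ → ℂ := fun k => x k / (α k : ℂ) with hc
  set p : FormalMultilinearSeries ℂ ℂ ℂ := FormalMultilinearSeries.ofScalars ℂ c with hp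
  have hnorm : ∀ n, ‖p n‖ = ‖c n‖ := fun n =>
    FormalMultilinearSeries.ofScalars_norm ℂ c n
  have hcn : ∀ n, ‖c n‖ ≤ ‖x‖ * (C * 2 ^ n) := by
    intro n
    have hak : (0:ℝ) < α n := hα.1 n
    have hxk : ‖x n‖ ≤ ‖x‖ := lp.norm_apply_le_norm (by norm_num) x n
    have : ‖c n‖ = ‖x n‖ * (1 / α n) := by
      rw [hc, norm_div, Complex.norm_real, Real.norm_eq_abs, abs_of_pos hak]; ring
    rw [this]
    exact mul_le_mul hxk (hC n) (one_div_nonneg.mpr hak.le) (norm_nonneg x)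
  have hrad : ((1/4 : ℝ≥0) : ℝ≥0∞) ≤ p.radius := by
    apply p.le_radius_of_bound (‖x‖ * C)
    intro n
    rw [hnorm]
    have h1 : (((1/4 : ℝ≥0)) : ℝ) = 1/4 := by norm_num
    rw [h1]
    have h2 : ‖c n‖ * (1/4:ℝ)^n ≤ (‖x‖ * (C * 2^n)) * (1/4:ℝ)^n := by
      have := hcn n
      have h4 : (0:ℝ) ≤ (1/4:ℝ)^n := by positivity
      nlinarith
    refine h2.trans ?_
    have h3 : (‖x‖ * (C * 2^n)) * (1/4:ℝ)^n = (‖x‖*C) * ((1:ℝ)/2)^n := by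
      rw [show ((1:ℝ)/2) = 2 * (1/4) by norm_num, mul_pow]
      ring
    rw [h3]
    have h4 : ((1:ℝ)/2)^n ≤ 1 := pow_le_one₀ (by norm_num) (by norm_num)
    exact mul_le_of_le_one_right (mul_nonneg (norm_nonneg x) hC0) h4
  have hpos : 0 < p.radius := lt_of_lt_of_le (by norm_num) hrad
  have hball := p.hasFPowerSeriesOnBall hpos
  have hsum : p.sum = rep α x := by
    funext z
    show FormalMultilinearSeries.ofScalarsSum c z = _
    rw [FormalMultilinearSeries.ofScalars_sum_eq]
    exact tsum_congr fun n => by rw [smul_eq_mul]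
  rw [hsum] at hball
  have hat : HasFPowerSeriesAt (rep α x) p 0 := hball.hasFPowerSeriesAt
  have heq : rep α x =ᶠ[𝓝 (0:ℂ)] 0 :=
    Filter.eventuallyEq_of_mem (Metric.ball_mem_nhds (0:ℂ) (by norm_num : (0:ℝ) < 1/2)) h
  have hp0 : p = 0 := hat.eq_zero_of_eventually heq
  have hc0 : c = 0 := by
    rwa [hp, FormalMultilinearSeries.ofScalars_series_eq_zero] at hp0
  apply lp.ext
  funext k
  have : c k = 0 := by rw [hc0]; rfl
  rw [hc] at this
  have hak : ((α k : ℝ) : ℂ) ≠ 0 := by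
    exact_mod_cast Complex.ofReal_ne_zero.mpr (ne_of_gt (hα.1 k))
  have := div_eq_zero_iff.mp this
  simp only [lp.coeFn_zero, Pi.zero_apply]
  tauto

lemma e_apply_self (k : ℕ) : e k k = 1 :=
  lp.single_apply_self (E := fun _ : ℕ => ℂ) 2 k 1

lemma e_apply_ne {k j : ℕ} (h : j ≠ k) : e k j = 0 :=
  lp.single_apply_ne (E := fun _ : ℕ => ℂ) 2 k 1 h

lemma mult_shift {α : ℕ → ℝ} (hα : GoodWeight α) (M : H2 →L[ℂ] H2)
    (hM : IsMultOp α α (fun z => z) M) (j : ℕ) :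
    M (e j) = ((α (j+1) / α j : ℝ) : ℂ) • e (j+1) := by
  rw [← sub_eq_zero]
  apply rep_zero_imp hα
  intro z hz
  have hz2 : ‖z‖ < 1/2 := by simpa [mem_ball_zero_iff] using hz
  have hz1 : z ∈ ball (0:ℂ) 1 := by
    rw [mem_ball_zero_iff] at *
    linarith
  rw [rep_sub hα _ _ hz2, rep_smul, rep_single, hM (e j) z hz1, rep_single]
  have haj : ((α j : ℝ):ℂ) ≠ 0 := Complex.ofReal_ne_zero.mpr (ne_of_gt (hα.1 j))
  have haj1 : ((α (j+1) : ℝ):ℂ) ≠ 0 := Complex.ofReal_ne_zero.mpr (ne_of_gt (hα.1 (j+1)))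
  push_cast
  field_simp
  ring

lemma adj_coord {α : ℕ → ℝ} (hα : GoodWeight α) (M : H2 →L[ℂ] H2)
    (hM : IsMultOp α α (fun z => z) M) (v : H2) (j : ℕ) :
    (ContinuousLinearMap.adjoint M v) j = ((α (j+1) / α j : ℝ) : ℂ) * v (j+1) := by
  rw [coord_eq_inner, ContinuousLinearMap.adjoint_inner_right, mult_shift hα M hM j,
      inner_smul_left, Complex.conj_ofReal, ← coord_eq_inner]

lemma adj_pow_coord {α : ℕ → ℝ} (hα : GoodWeight α) {M : H2 →L[ℂ] H2}
    (hM : IsMultOp α α (fun z => z) M) (n : ℕ) (v : H2) (j : ℕ) :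
    ((ContinuousLinearMap.adjoint M ^ n) v) j = ((α (j+n) / α j : ℝ) : ℂ) * v (j+n) := by
  induction n generalizing v with
  | zero => simp [div_self (hα.1 j).ne']
  | succ n ih =>
      have hstep : (ContinuousLinearMap.adjoint M ^ (n+1)) v
          = (ContinuousLinearMap.adjoint M ^ n) (ContinuousLinearMap.adjoint M v) := by
        rw [pow_succ]; rfl
      rw [hstep, ih, adj_coord hα M hM]
      have h1 : ((α (j+n) : ℝ):ℂ) ≠ 0 := Complex.ofReal_ne_zero.mpr (ne_of_gt (hα.1 (j+n)))
      have h2 : ((α j : ℝ):ℂ) ≠ 0 := Complex.ofReal_ne_zero.mpr (ne_of_gt (hα.1 j))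
      push_cast
      field_simp
      ring

lemma adj_e_succ {β : ℕ → ℝ} (hβ : GoodWeight β) {M : H2 →L[ℂ] H2}
    (hM : IsMultOp β β (fun z => z) M) (m : ℕ) :
    ContinuousLinearMap.adjoint M (e (m+1)) = ((β (m+1) / β m : ℝ):ℂ) • e m := by
  apply lp.ext
  funext j
  rw [adj_coord hβ M hM, lp.coeFn_smul, Pi.smul_apply, smul_eq_mul]
  by_cases hj : j = m
  · subst hj
    rw [e_apply_self, e_apply_self]
  · have h1 : j + 1 ≠ m + 1 := by omega
    rw [e_apply_ne h1, e_apply_ne hj]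
    ring

lemma adj_e_zero {β : ℕ → ℝ} (hβ : GoodWeight β) {M : H2 →L[ℂ] H2}
    (hM : IsMultOp β β (fun z => z) M) :
    ContinuousLinearMap.adjoint M (e 0) = 0 := by
  apply lp.ext
  funext j
  rw [adj_coord hβ M hM, e_apply_ne (Nat.succ_ne_zero j)]
  simp

lemma adj_pow_e {β : ℕ → ℝ} (hβ : GoodWeight β) {M : H2 →L[ℂ] H2}
    (hM : IsMultOp β β (fun z => z) M) (n k : ℕ) :
    (ContinuousLinearMap.adjoint M ^ n) (e (k+n)) = ((β (k+n) / β k : ℝ):ℂ) • e k := by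
  induction n with
  | zero => simp [div_self (hβ.1 k).ne']
  | succ n ih =>
      have hstep : (ContinuousLinearMap.adjoint M ^ (n+1)) (e (k+(n+1)))
          = (ContinuousLinearMap.adjoint M ^ n) (ContinuousLinearMap.adjoint M (e ((k+n)+1))) := by
        rw [pow_succ]; rfl
      rw [hstep, adj_e_succ hβ hM (k+n), map_smul, ih, smul_smul]
      congr 1
      rw [← Complex.ofReal_mul]
      congr 1
      rw [div_mul_div_comm, mul_comm (β (k+n+1)) (β (k+n)),
        mul_div_mul_left _ _ (hβ.1 (k+n)).ne']
      rfl

lemma adj_pow_e_zero {β : ℕ → ℝ} (hβ : GoodWeight β) {M : H2 →L[ℂ] H2}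
    (hM : IsMultOp β β (fun z => z) M) (n : ℕ) :
    (ContinuousLinearMap.adjoint M ^ (n+1)) (e n) = 0 := by
  have h := adj_pow_e hβ hM n 0
  rw [Nat.zero_add] at h
  have hstep : (ContinuousLinearMap.adjoint M ^ (n+1)) (e n)
      = ContinuousLinearMap.adjoint M ((ContinuousLinearMap.adjoint M ^ n) (e n)) := by
    rw [pow_succ']; rfl
  rw [hstep, h, map_smul, adj_e_zero hβ hM, smul_zero]

lemma ratio_shift {β : ℕ → ℝ} (hβ : GoodWeight β) (d : ℕ) :
    Tendsto (fun n => β (n + d) / β n) atTop (𝓝 1) := by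
  induction d with
  | zero =>
      have h : (fun n => β (n+0)/β n) = fun _ => (1:ℝ) :=
        funext fun n => by simp [div_self (hβ.1 n).ne']
      rw [h]
      exact tendsto_const_nhds
  | succ d ih =>
      have h1 : Tendsto (fun n => β ((n + d) + 1) / β (n + d)) atTop (𝓝 1) :=
        hβ.2.comp (tendsto_add_atTop_nat d)
      have h2 := h1.mul ih
      rw [one_mul] at h2
      apply h2.congr
      intro n
      have hb : β (n+d) ≠ 0 := (hβ.1 _).ne'
      have hb2 : β n ≠ 0 := (hβ.1 _).ne'
      field_simp
      ring

lemma op_id (A B X Y : H2 →L[ℂ] H2) (hK : A * Y = Y * B) (hR : Y = A * X - X * B) (n : ℕ) :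
    A ^ (n+1) * X - X * B ^ (n+1) = ((n+1 : ℕ) : ℂ) • (Y * B ^ n) := by
  induction n with
  | zero => simpa using hR.symm
  | succ n ih =>
      have key : A ^ (n+2) * X - X * B ^ (n+2)
          = A * (A ^ (n+1) * X - X * B ^ (n+1)) + (A * X - X * B) * B ^ (n+1) := by
        rw [pow_succ' A (n+1), pow_succ' B (n+1)]
        noncomm_ring
      rw [key, ih, ← hR, mul_smul_comm, ← mul_assoc, hK, mul_assoc, ← pow_succ']
      have hc : ((n+1+1 : ℕ) : ℂ) = ((n+1 : ℕ) : ℂ) + 1 := by push_cast; ring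
      rw [hc, add_smul, one_smul]

lemma alg10 (A a t B b1 bk m : ℝ) (ha : a ≠ 0) (hB : B ≠ 0) (hb1 : b1 ≠ 0) (hm : m ≠ 0) :
    ((A/a) * t + t * (B/b1)) * (bk/(m * B))
      = (t * bk / a) * (A/(m*B)) + (t * bk / b1) * (1/m) := by
  field_simp

lemma one_div_tendsto : Tendsto (fun n : ℕ => 1/((n:ℝ)+1)) atTop (𝓝 0) :=
  Tendsto.div_atTop tendsto_const_nhds
    (tendsto_atTop_add_const_right atTop 1 tendsto_natCast_atTop_atTop)

lemma bound_tendsto {α β : ℕ → ℝ} (hα : GoodWeight α) (hβ : GoodWeight β)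
    (hlim : Tendsto (fun k : ℕ => α k / ((k : ℝ) * β k)) atTop (𝓝 0)) (j k : ℕ) (c1 c2 : ℝ) :
    Tendsto (fun n : ℕ => c1 * (α (j+n+1) / (((n:ℝ)+1) * β (k+n))) + c2 * (1/((n:ℝ)+1)))
      atTop (𝓝 0) := by
  have hn1 : Tendsto (fun n : ℕ => ((n:ℝ)+1)) atTop atTop :=
    tendsto_atTop_add_const_right atTop 1 tendsto_natCast_atTop_atTop
  have hv : Tendsto (fun n : ℕ => ((n:ℝ)+(j:ℝ)+1)/((n:ℝ)+1)) atTop (𝓝 1) := by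
    have h0 : Tendsto (fun n : ℕ => (j:ℝ)/((n:ℝ)+1)) atTop (𝓝 0) :=
      Tendsto.div_atTop tendsto_const_nhds hn1
    have h1 := h0.add (tendsto_const_nhds (x := (1:ℝ)))
    rw [zero_add] at h1
    apply h1.congr
    intro n
    have h3 : ((n:ℝ)+1) ≠ 0 := by positivity
    field_simp
    ring
  have hg : Tendsto (fun n : ℕ => α (j+n+1) / ((((n:ℝ)+(j:ℝ)+1)) * β (j+n+1))) atTop (𝓝 0) := by
    have h := hlim.comp (tendsto_add_atTop_nat (j+1))
    apply h.congr
    intro n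
    show α (n+(j+1)) / ((((n+(j+1) : ℕ)):ℝ) * β (n+(j+1))) = _
    have hidx : n + (j+1) = j + n + 1 := by omega
    rw [hidx]
    push_cast
    ring_nf
  have hw : Tendsto (fun n : ℕ => β (j+n+1) / β (k+n)) atTop (𝓝 1) := by
    have h3 := (ratio_shift hβ (j+1)).div (ratio_shift hβ k) one_ne_zero
    rw [div_one] at h3
    apply h3.congr
    intro n
    have e1 : n + (j+1) = j+n+1 := by omega
    have e2 : n + k = k + n := by omega
    simp only [Pi.div_apply]
    rw [e1, e2]
    have hbn : β n ≠ 0 := (hβ.1 n).ne'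
    have hbkn : β (k+n) ≠ 0 := (hβ.1 (k+n)).ne'
    field_simp
  have hu : Tendsto (fun n : ℕ => α (j+n+1) / (((n:ℝ)+1) * β (k+n))) atTop (𝓝 0) := by
    have h := (hg.mul hv).mul hw
    rw [zero_mul, zero_mul] at h
    apply h.congr
    intro n
    have h1 : β (k+n) ≠ 0 := (hβ.1 _).ne'
    have h2 : β (j+n+1) ≠ 0 := (hβ.1 _).ne'
    have h3 : ((n:ℝ)+1) ≠ 0 := by positivity
    have h4 : ((n:ℝ)+(j:ℝ)+1) ≠ 0 := by positivity
    field_simp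
  have := (hu.const_mul c1).add (one_div_tendsto.const_mul c2)
  simpa using this
end SIAux

open SIAux in
theorem stmt_1 (α β : ℕ → ℝ) (hα : GoodWeight α) (hβ : GoodWeight β)
    (hlim : Tendsto (fun k : ℕ => α k / ((k : ℝ) * β k)) atTop (𝓝 0))
    (Mza Mzb : H2 →L[ℂ] H2)
    (hMza : IsMultOp α α (fun z => z) Mza)
    (hMzb : IsMultOp β β (fun z => z) Mzb)
    (Y X : H2 →L[ℂ] H2)
    (hKer : (ContinuousLinearMap.adjoint Mza).comp Y
      = Y.comp (ContinuousLinearMap.adjoint Mzb))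
    (hRan : Y = (ContinuousLinearMap.adjoint Mza).comp X
      - X.comp (ContinuousLinearMap.adjoint Mzb)) :
    Y = 0 := by
  have hK : ContinuousLinearMap.adjoint Mza * Y = Y * ContinuousLinearMap.adjoint Mzb := by
    rw [ContinuousLinearMap.mul_def, ContinuousLinearMap.mul_def]; exact hKer
  have hR : Y = ContinuousLinearMap.adjoint Mza * X - X * ContinuousLinearMap.adjoint Mzb := by
    rw [ContinuousLinearMap.mul_def, ContinuousLinearMap.mul_def]; exact hRan
  have hid := op_id (ContinuousLinearMap.adjoint Mza) (ContinuousLinearMap.adjoint Mzb) X Y hK hR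
  have hXnorm : ∀ w : H2, ∀ m : ℕ, ‖(X w) m‖ ≤ ‖X‖ * ‖w‖ := fun w m =>
    (lp.norm_apply_le_norm (by norm_num) (X w) m).trans (X.le_opNorm w)
  have key : ∀ k j : ℕ, (Y (e k)) j = 0 := by
    intro k j
    have haj : (0:ℝ) < α j := hα.1 j
    have hbk : (0:ℝ) < β k := hβ.1 k
    have hbk1 : (0:ℝ) < β (k-1) := hβ.1 (k-1)
    set c1 : ℝ := ‖X‖ * β k / α j with hc1
    set c2 : ℝ := ‖X‖ * β k / β (k-1) with hc2
    have hineq : ∀ n : ℕ, ‖(Y (e k)) j‖ ≤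
        c1 * (α (j+n+1) / (((n:ℝ)+1) * β (k+n))) + c2 * (1/((n:ℝ)+1)) := by
      intro n
      have hbkn : (0:ℝ) < β (k+n) := hβ.1 (k+n)
      have hn : (0:ℝ) < (n:ℝ)+1 := by positivity
      have hajn : (0:ℝ) < α (j+(n+1)) := hα.1 _
      have happ := congrArg (fun T : H2 →L[ℂ] H2 => (T (e (k+n))) j) (hid n)
      simp only [ContinuousLinearMap.sub_apply, ContinuousLinearMap.mul_apply,
        ContinuousLinearMap.smul_apply, lp.coeFn_sub, Pi.sub_apply, lp.coeFn_smul,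
        Pi.smul_apply, smul_eq_mul] at happ
      rw [adj_pow_coord hα hMza (n+1) (X (e (k+n))) j] at happ
      rw [adj_pow_e hβ hMzb n k, map_smul] at happ
      simp only [lp.coeFn_smul, Pi.smul_apply, smul_eq_mul] at happ
      -- norm of RHS
      have hrhs : ‖((n+1 : ℕ) : ℂ) * (((β (k+n) / β k : ℝ):ℂ) * (Y (e k)) j)‖
          = ((n:ℝ)+1) * ((β (k+n)/β k) * ‖(Y (e k)) j‖) := by
        rw [norm_mul, norm_mul, Complex.norm_natCast, Complex.norm_real, Real.norm_eq_abs,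
          abs_of_pos (div_pos hbkn hbk)]
        push_cast
        ring
      have ha1 : ‖((α (j+(n+1)) / α j : ℝ):ℂ) * (X (e (k+n))) (j+(n+1))‖
          ≤ (α (j+n+1)/α j) * ‖X‖ := by
        rw [norm_mul, Complex.norm_real, Real.norm_eq_abs, abs_of_pos (div_pos hajn haj)]
        have h5 := hXnorm (e (k+n)) (j+(n+1))
        rw [norm_e, mul_one] at h5
        exact mul_le_mul_of_nonneg_left h5 (div_pos hajn haj).le
      have ha2 : ‖(X ((ContinuousLinearMap.adjoint Mzb ^ (n+1)) (e (k+n)))) j‖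
          ≤ ‖X‖ * (β (k+n)/β (k-1)) := by
        cases k with
        | zero =>
            have h0 : (ContinuousLinearMap.adjoint Mzb ^ (n+1)) (e (0+n)) = 0 := by
              rw [Nat.zero_add]; exact adj_pow_e_zero hβ hMzb n
            rw [h0, map_zero]
            simp only [lp.coeFn_zero, Pi.zero_apply, norm_zero]
            exact mul_nonneg (norm_nonneg _) (div_nonneg (hβ.1 _).le (hβ.1 _).le)
        | succ k' =>
            have hidx : k' + 1 + n = k' + (n+1) := by omega
            have h1 : (ContinuousLinearMap.adjoint Mzb ^ (n+1)) (e (k'+1+n))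
                = ((β (k'+1+n) / β k' : ℝ):ℂ) • e k' := by
              rw [hidx]; exact adj_pow_e hβ hMzb (n+1) k'
            rw [h1, map_smul]
            simp only [lp.coeFn_smul, Pi.smul_apply, smul_eq_mul, norm_mul,
              Complex.norm_real, Real.norm_eq_abs, Nat.add_sub_cancel]
            rw [abs_of_pos (div_pos (hβ.1 _) (hβ.1 k'))]
            have h5 := hXnorm (e k') j
            rw [norm_e, mul_one] at h5
            calc (β (k'+1+n)/β k') * ‖(X (e k')) j‖ ≤ (β (k'+1+n)/β k') * ‖X‖ :=
                  mul_le_mul_of_nonneg_left h5 (div_pos (hβ.1 _) (hβ.1 k')).le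
              _ = ‖X‖ * (β (k'+1+n)/β k') := by ring
      have hmain : ((n:ℝ)+1) * ((β (k+n)/β k) * ‖(Y (e k)) j‖)
          ≤ (α (j+n+1)/α j) * ‖X‖ + ‖X‖ * (β (k+n)/β (k-1)) := by
        calc ((n:ℝ)+1) * ((β (k+n)/β k) * ‖(Y (e k)) j‖)
            = ‖((n+1 : ℕ) : ℂ) * (((β (k+n) / β k : ℝ):ℂ) * (Y (e k)) j)‖ := hrhs.symm
          _ = ‖((α (j+(n+1)) / α j : ℝ):ℂ) * (X (e (k+n))) (j+(n+1))
              - (X ((ContinuousLinearMap.adjoint Mzb ^ (n+1)) (e (k+n)))) j‖ := by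
                rw [happ]
          _ ≤ ‖((α (j+(n+1)) / α j : ℝ):ℂ) * (X (e (k+n))) (j+(n+1))‖
              + ‖(X ((ContinuousLinearMap.adjoint Mzb ^ (n+1)) (e (k+n)))) j‖ :=
                norm_sub_le _ _
          _ ≤ (α (j+n+1)/α j) * ‖X‖ + ‖X‖ * (β (k+n)/β (k-1)) := add_le_add ha1 ha2
      have h9 : ‖(Y (e k)) j‖ = (((n:ℝ)+1) * ((β (k+n)/β k) * ‖(Y (e k)) j‖))
          * (β k/(((n:ℝ)+1) * β (k+n))) := by
        field_simp
      rw [h9]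
      have h10 : (((α (j+n+1)/α j) * ‖X‖ + ‖X‖ * (β (k+n)/β (k-1))))
          * (β k/(((n:ℝ)+1) * β (k+n)))
          = c1 * (α (j+n+1) / (((n:ℝ)+1) * β (k+n))) + c2 * (1/((n:ℝ)+1)) := by
        rw [hc1, hc2]
        exact alg10 _ _ _ _ _ _ _ haj.ne' hbkn.ne' hbk1.ne' hn.ne'
      rw [← h10]
      exact mul_le_mul_of_nonneg_right hmain (div_pos hbk (mul_pos hn hbkn)).le
    have hle : ‖(Y (e k)) j‖ ≤ 0 :=
      ge_of_tendsto' (bound_tendsto hα hβ hlim j k c1 c2) hineq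
    exact norm_le_zero_iff.mp hle
  have hYe : ∀ k, Y (e k) = 0 := fun k => lp.ext (funext fun j => by
    rw [key k j]; simp)
  ext x
  have hs : HasSum (fun i => lp.single 2 i (x i)) x := lp.hasSum_single (by norm_num) x
  have hs2 : HasSum (fun i => Y (lp.single 2 i (x i))) (Y x) := hs.mapL Y
  have hz : ∀ i : ℕ, Y (lp.single 2 i (x i)) = 0 := by
    intro i
    have hsingle : lp.single 2 i (x i) = x i • e i := by
      rw [show e i = lp.single 2 i (1:ℂ) from rfl, ← lp.single_smul]
      norm_num
    rw [hsingle, map_smul, hYe, smul_zero]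
  simp only [hz] at hs2
  have := hs2.unique hasSum_zero
  simp [this]

end
end

section
/- Let α be a positive weight sequence with lim_{k→∞} α(k+1)/α(k) = 1 such that H²_α has property A for a positive integer n. For j = 0,1,…,n−1, let H_{α,j} be the closed linear span in H²_α of {z^{j+kn} : k ≥ 0}. Then for each j = 0,1,…,n−1, the map X_{α,j} : H²_α → H_{α,j} sending f = Σ_{k≥0} f̂(k) z^k to Σ_{k≥0} f̂(k) z^{j+kn} is a bounded, invertible linear operator, and M_{α,z^n}|_{H_{α,j}} ∘ X_{α,j} = X_{α,j} ∘ M_{α,z}. Consequently, the operator M_{α,z^n} = (M_{α,z})^n on H²_α is similar to the direct sum of n copies of M_{α,z}. -/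
open Complex Metric Filter ComplexConjugate
open scoped Topology ENNReal

noncomputable section

/-- The closed subspace of (the model of) `H²_α` spanned by `{z^(j+kn) : k ≥ 0}`:
vectors supported on indices of the form `j + k*n`. -/
def resSubspace (j n : ℕ) : Submodule ℂ H2 where
  carrier := {x : H2 | ∀ m : ℕ, (¬ ∃ k : ℕ, m = j + k * n) → x m = 0}
  add_mem' := by
    intro x y hx hy m hm
    have : (↑(x + y) : ∀ _ : ℕ, ℂ) m = (↑x : ∀ _ : ℕ, ℂ) m + (↑y : ∀ _ : ℕ, ℂ) m := by
      simp [lp.coeFn_add]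
    simp only [Set.mem_setOf_eq] at hx hy
    rw [this, hx m hm, hy m hm, add_zero]
  zero_mem' := by
    intro m _
    have : (↑(0 : H2) : ∀ _ : ℕ, ℂ) m = 0 := by simp [lp.coeFn_zero]
    exact this
  smul_mem' := by
    intro c x hx m hm
    have : (↑(c • x) : ∀ _ : ℕ, ℂ) m = c • (↑x : ∀ _ : ℕ, ℂ) m := by
      simp [lp.coeFn_smul]
    simp only [Set.mem_setOf_eq] at hx
    rw [this, hx m hm, smul_zero]

open scoped NNReal

section Aux

variable {α : ℕ → ℝ}

lemma alpha_ne (hα : GoodWeight α) (k : ℕ) : ((α k : ℝ) : ℂ) ≠ 0 := by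
  exact_mod_cast (hα.1 k).ne'

lemma growth (hα : GoodWeight α) : ∃ N : ℕ, ∀ k, N ≤ k → α N * (2/3 : ℝ) ^ k ≤ α k := by
  have h : ∀ᶠ k in atTop, (2/3 : ℝ) < α (k + 1) / α k :=
    hα.2.eventually (eventually_gt_nhds (by norm_num))
  obtain ⟨N, hN⟩ := h.exists_forall_of_atTop
  refine ⟨N, fun k hk => ?_⟩
  have key : ∀ m, α N * (2/3 : ℝ) ^ m ≤ α (N + m) := by
    intro m
    induction m with
    | zero => simp
    | succ m ih =>
      have h1 : (2/3 : ℝ) * α (N + m) ≤ α (N + m + 1) := by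
        have := hN (N + m) (Nat.le_add_right _ _)
        have hpos := hα.1 (N + m)
        rw [lt_div_iff₀ hpos] at this
        linarith
      calc α N * (2/3 : ℝ) ^ (m + 1) = (2/3 : ℝ) * (α N * (2/3 : ℝ) ^ m) := by ring
      _ ≤ (2/3 : ℝ) * α (N + m) := by nlinarith
      _ ≤ α (N + m + 1) := h1
  have h2 := key (k - N)
  rw [Nat.add_sub_cancel' hk] at h2
  refine le_trans ?_ h2
  have hNpos := hα.1 N
  have : (2/3 : ℝ) ^ k ≤ (2/3 : ℝ) ^ (k - N) :=
    pow_le_pow_of_le_one (by norm_num) (by norm_num) (Nat.sub_le k N)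
  nlinarith

lemma summable_half (hα : GoodWeight α) (c : ℕ → ℂ) (B : ℝ) (hc : ∀ k, ‖c k‖ ≤ B) :
    Summable fun k => ‖c k / (α k : ℂ)‖ * (1/2 : ℝ) ^ k := by
  obtain ⟨N, hN⟩ := growth hα
  have hgeo : Summable fun k : ℕ => (3/4 : ℝ) ^ k :=
    summable_geometric_of_lt_one (by norm_num) (by norm_num)
  refine summable_of_isBigO_nat hgeo ?_
  rw [Asymptotics.isBigO_iff]
  refine ⟨B / α N, ?_⟩
  filter_upwards [eventually_ge_atTop N] with k hk
  have hNpos := hα.1 N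
  have hkpos := hα.1 k
  have hg := hN k hk
  have h1 : ‖c k / (α k : ℂ)‖ = ‖c k‖ / α k := by
    rw [norm_div]
    congr 1
    rw [Complex.norm_real, Real.norm_eq_abs, abs_of_pos hkpos]
  have hBnn : 0 ≤ B := le_trans (norm_nonneg _) (hc 0)
  have hb : ‖c k‖ / α k ≤ B / (α N * (2/3:ℝ)^k) := by
    apply div_le_div₀ (by positivity) (hc k) (by positivity) hg
  have h2 : ‖c k / (α k : ℂ)‖ * (1/2:ℝ)^k ≤ (B / α N) * (3/4:ℝ)^k := by
    rw [h1]
    calc ‖c k‖ / α k * (1/2:ℝ)^k ≤ B / (α N * (2/3:ℝ)^k) * (1/2:ℝ)^k := by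
          apply mul_le_mul_of_nonneg_right hb (by positivity)
    _ = (B / α N) * (3/4:ℝ)^k := by
          have hc : (3/4:ℝ)^k * (2/3:ℝ)^k = (1/2:ℝ)^k := by rw [← mul_pow]; norm_num
          have h23 : (0:ℝ) < (2/3:ℝ)^k := by positivity
          rw [div_mul_eq_mul_div, div_mul_eq_mul_div, div_eq_div_iff (by positivity) (by positivity), ← hc]
          ring
  have hnn : 0 ≤ ‖c k / (α k : ℂ)‖ * (1/2:ℝ)^k := by positivity
  rw [Real.norm_of_nonneg hnn, Real.norm_of_nonneg (by positivity)]
  exact h2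

lemma coeff_eq_of_tsum_eq {a b : ℕ → ℂ}
    (ha : Summable fun k => ‖a k‖ * (1/2 : ℝ) ^ k)
    (hb : Summable fun k => ‖b k‖ * (1/2 : ℝ) ^ k)
    (h : ∀ z : ℂ, ‖z‖ < 1/2 → ∑' k, a k * z ^ k = ∑' k, b k * z ^ k) : a = b := by
  set p := FormalMultilinearSeries.ofScalars ℂ a with hp
  set q := FormalMultilinearSeries.ofScalars ℂ b with hq
  have hra : ((1/2 : ℝ≥0) : ℝ≥0∞) ≤ p.radius := by
    apply p.le_radius_of_summable_norm
    have he : ∀ n : ℕ, ‖p n‖ * (((1/2 : ℝ≥0)) : ℝ) ^ n = ‖a n‖ * (1/2 : ℝ) ^ n := by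
      intro n
      rw [hp, FormalMultilinearSeries.ofScalars_norm]
      norm_num
    exact ha.congr fun n => (he n).symm
  have hrb : ((1/2 : ℝ≥0) : ℝ≥0∞) ≤ q.radius := by
    apply q.le_radius_of_summable_norm
    have he : ∀ n : ℕ, ‖q n‖ * (((1/2 : ℝ≥0)) : ℝ) ^ n = ‖b n‖ * (1/2 : ℝ) ^ n := by
      intro n
      rw [hq, FormalMultilinearSeries.ofScalars_norm]
      norm_num
    exact hb.congr fun n => (he n).symm
  have hppos : 0 < p.radius := lt_of_lt_of_le (by norm_num) hra
  have hqpos : 0 < q.radius := lt_of_lt_of_le (by norm_num) hrb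
  have hP : HasFPowerSeriesAt p.sum p 0 := (p.hasFPowerSeriesOnBall hppos).hasFPowerSeriesAt
  have hQ : HasFPowerSeriesAt q.sum q 0 := (q.hasFPowerSeriesOnBall hqpos).hasFPowerSeriesAt
  have hsum : ∀ z : ℂ, ‖z‖ < 1/2 → p.sum z = q.sum z := by
    intro z hz
    have hpz : p.sum z = ∑' k, a k * z ^ k := by
      rw [FormalMultilinearSeries.sum]
      exact tsum_congr fun n => by
        rw [hp, FormalMultilinearSeries.ofScalars_apply_eq, smul_eq_mul]
    have hqz : q.sum z = ∑' k, b k * z ^ k := by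
      rw [FormalMultilinearSeries.sum]
      exact tsum_congr fun n => by
        rw [hq, FormalMultilinearSeries.ofScalars_apply_eq, smul_eq_mul]
    rw [hpz, hqz, h z hz]
  have hev : q.sum =ᶠ[𝓝 (0:ℂ)] p.sum := by
    filter_upwards [Metric.ball_mem_nhds (0:ℂ) (by norm_num : (0:ℝ) < 1/2)] with z hz
    rw [mem_ball_zero_iff] at hz
    exact (hsum z hz).symm
  have hQ' : HasFPowerSeriesAt p.sum q 0 := hQ.congr hev
  have : p = q := hP.eq_formalMultilinearSeries hQ'
  exact FormalMultilinearSeries.ofScalars_series_injective ℂ ℂ this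

lemma summable_half' (hα : GoodWeight α) (x : H2) :
    Summable fun k => ‖x k / (α k : ℂ)‖ * (1/2 : ℝ) ^ k :=
  summable_half hα (fun k => x k) ‖x‖ fun k =>
    lp.norm_apply_le_norm (by norm_num) x k

lemma Mza_coeff (hα : GoodWeight α) {Mza : H2 →L[ℂ] H2}
    (hMza : IsMultOp α α (fun z => z) Mza) (x : H2) :
    (Mza x) 0 = 0 ∧ ∀ k, (Mza x) (k+1) = ((α (k+1) / α k : ℝ) : ℂ) * x k := by
  set b : ℕ → ℂ := fun m => if m = 0 then 0 else x (m-1) / (α (m-1) : ℂ) with hbdef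
  have hb1 : ∀ k, b (k+1) = x k / (α k : ℂ) := fun k => by simp [hbdef]
  have ha : Summable fun k => ‖(Mza x) k / (α k : ℂ)‖ * (1/2 : ℝ) ^ k :=
    summable_half' hα (Mza x)
  have hb : Summable fun k => ‖b k‖ * (1/2 : ℝ) ^ k := by
    rw [← summable_nat_add_iff 1]
    have : ∀ k : ℕ, (‖x k / (α k : ℂ)‖ * (1/2:ℝ)^k) * (1/2:ℝ) = ‖b (k+1)‖ * (1/2:ℝ)^(k+1) := by
      intro k
      rw [hb1 k, pow_succ]
      ring
    exact ((summable_half' hα x).mul_right (1/2)).congr this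
  have heq : (fun k => (Mza x) k / (α k : ℂ)) = b := by
    apply coeff_eq_of_tsum_eq ha hb
    intro z hz
    have hzball : z ∈ ball (0:ℂ) 1 := by
      rw [mem_ball_zero_iff]; linarith
    have hL : ∑' k, (Mza x) k / (α k : ℂ) * z ^ k = z * rep α x z := hMza x z hzball
    rw [hL]
    -- RHS
    have hbsum : Summable fun k => b k * z ^ k := by
      apply Summable.of_norm
      apply Summable.of_nonneg_of_le (fun k => norm_nonneg _) _ hb
      intro k
      rw [norm_mul, norm_pow]
      apply mul_le_mul_of_nonneg_left _ (norm_nonneg _)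
      apply pow_le_pow_left₀ (norm_nonneg _) (le_of_lt hz)
    rw [Summable.tsum_eq_zero_add hbsum]
    simp only [pow_zero, mul_one, hbdef]
    norm_num
    have hterm : ∀ k : ℕ, (x k : ℂ) / (α k : ℂ) * z ^ (k+1) = (x k / (α k : ℂ) * z ^ k) * z := by
      intro k
      rw [pow_succ]
      ring
    rw [tsum_congr hterm, tsum_mul_right, rep, mul_comm]
  constructor
  · have h0 := congrFun heq 0
    simp only [hbdef, if_pos rfl] at h0
    have := alpha_ne hα 0
    field_simp at h0
    simpa using h0
  · intro k
    have hk := congrFun heq (k+1)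
    rw [hb1 k] at hk
    have h1 := alpha_ne hα (k+1)
    have h2 := alpha_ne hα k
    rw [div_eq_div_iff h1 h2] at hk
    rw [Complex.ofReal_div, div_mul_eq_mul_div, eq_div_iff h2, hk]
    ring

lemma Mza_pow_coeff (hα : GoodWeight α) {Mza : H2 →L[ℂ] H2}
    (hMza : IsMultOp α α (fun z => z) Mza) (s : ℕ) (x : H2) (m : ℕ) :
    ((Mza ^ s) x) m =
      if s ≤ m then ((α m / α (m - s) : ℝ) : ℂ) * x (m - s) else 0 := by
  induction s generalizing x with
  | zero =>
    simp only [pow_zero, ContinuousLinearMap.one_apply, Nat.zero_le, if_true, Nat.sub_zero]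
    rw [div_self (hα.1 m).ne']
    simp
  | succ s ih =>
    rw [pow_succ, ContinuousLinearMap.mul_apply, ih (Mza x)]
    by_cases h : s + 1 ≤ m
    · have hs : s ≤ m := Nat.le_of_succ_le h
      rw [if_pos hs, if_pos h]
      have hms : m - s = (m - (s+1)) + 1 := by omega
      rw [hms, (Mza_coeff hα hMza x).2 (m - (s+1))]
      have h1 := alpha_ne hα (m - (s+1))
      have h2 := alpha_ne hα ((m - (s+1)) + 1)
      have h3 := alpha_ne hα m
      push_cast
      field_simp
    · rw [if_neg h]
      by_cases hs : s ≤ m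
      · rw [if_pos hs]
        have : m - s = 0 := by omega
        rw [this, (Mza_coeff hα hMza x).1, mul_zero]
      · rw [if_neg hs]

/-! ### index arithmetic -/

lemma cond_iff {j n : ℕ} (hn : 0 < n) (m : ℕ) :
    (j ≤ m ∧ (m - j) % n = 0) ↔ ∃ k, m = j + k * n := by
  constructor
  · rintro ⟨h1, h2⟩
    refine ⟨(m - j) / n, ?_⟩
    have := Nat.div_mul_cancel (Nat.dvd_of_mod_eq_zero h2)
    omega
  · rintro ⟨k, rfl⟩
    refine ⟨Nat.le_add_right _ _, ?_⟩
    simp [Nat.add_sub_cancel_left, Nat.mul_mod_left]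

lemma kOf_eq {j n : ℕ} (hn : 0 < n) (k : ℕ) : (j + k * n - j) / n = k := by
  rw [Nat.add_sub_cancel_left, Nat.mul_div_cancel _ hn]

lemma eInj {j n : ℕ} (hn : 0 < n) : Function.Injective (fun k : ℕ => j + k * n) := by
  intro a b h
  simp only [add_right_inj] at h
  exact Nat.eq_of_mul_eq_mul_right hn h

/-! ### ℓ² helpers -/

lemma two_toReal : ((2 : ℝ≥0∞)).toReal = 2 := by norm_num

lemma rpow2 (t : ℝ) : t ^ ((2 : ℝ≥0∞)).toReal = t ^ 2 := by
  rw [two_toReal, show ((2:ℝ)) = ((2:ℕ):ℝ) by norm_num, Real.rpow_natCast]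

lemma summable_sq (x : H2) : Summable fun m => ‖x m‖ ^ 2 :=
  ((lp.memℓp x).summable (by rw [two_toReal]; norm_num)).congr fun m => rpow2 _

lemma memℓp_two {f : ℕ → ℂ} (h : Summable fun m => ‖f m‖ ^ 2) : Memℓp f 2 :=
  memℓp_gen (h.congr fun m => (rpow2 _).symm)

lemma norm_sq_eq (x : H2) : ‖x‖ ^ 2 = ∑' m, ‖x m‖ ^ 2 := by
  have := lp.norm_rpow_eq_tsum (p := 2) (by rw [two_toReal]; norm_num) x
  rw [rpow2] at this
  rw [this]
  exact tsum_congr fun m => rpow2 _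

lemma norm_le_of_sq {x : H2} {C : ℝ} (hC : 0 ≤ C) (h : ∑' m, ‖x m‖ ^ 2 ≤ C ^ 2) :
    ‖x‖ ≤ C := by
  apply lp.norm_le_of_tsum_le (by rw [two_toReal]; norm_num) hC
  calc ∑' m, ‖x m‖ ^ ((2:ℝ≥0∞)).toReal = ∑' m, ‖x m‖ ^ 2 := tsum_congr fun m => rpow2 _
  _ ≤ C ^ 2 := h
  _ = C ^ ((2:ℝ≥0∞)).toReal := (rpow2 _).symm

/-! ### the spread operator -/

def spreadF (w : ℕ → ℝ) (j n : ℕ) (x : H2) : ℕ → ℂ := fun m =>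
  if j ≤ m ∧ (m - j) % n = 0 then (w ((m - j) / n) : ℂ) * x ((m - j) / n) else 0

lemma spreadF_apply {j n : ℕ} (hn : 0 < n) (w : ℕ → ℝ) (x : H2) (k : ℕ) :
    spreadF w j n x (j + k * n) = (w k : ℂ) * x k := by
  rw [spreadF, if_pos ((cond_iff hn _).2 ⟨k, rfl⟩), kOf_eq hn]

lemma spreadF_zero {j n : ℕ} (hn : 0 < n) (w : ℕ → ℝ) (x : H2) {m : ℕ}
    (h : ¬ ∃ k, m = j + k * n) : spreadF w j n x m = 0 := by
  rw [spreadF, if_neg]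
  intro hc
  exact h ((cond_iff hn m).1 hc)

lemma spread_supp {j n : ℕ} (hn : 0 < n) (w : ℕ → ℝ) (x : H2) :
    ∀ m ∉ Set.range (fun k : ℕ => j + k * n), ‖spreadF w j n x m‖ ^ 2 = 0 := by
  intro m hm
  rw [spreadF_zero hn w x (by simpa [Set.mem_range, eq_comm] using hm)]
  simp

lemma term_bound {C : ℝ} {w : ℕ → ℝ} (hw : ∀ k, |w k| ≤ C) (c : ℂ) (k : ℕ) :
    ‖(w k : ℂ) * c‖ ^ 2 ≤ C ^ 2 * ‖c‖ ^ 2 := by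
  rw [norm_mul, mul_pow, Complex.norm_real, Real.norm_eq_abs]
  apply mul_le_mul_of_nonneg_right _ (by positivity)
  exact pow_le_pow_left₀ (abs_nonneg _) (hw k) 2

lemma spread_summable {j n : ℕ} (hn : 0 < n) {C : ℝ} {w : ℕ → ℝ} (hw : ∀ k, |w k| ≤ C)
    (x : H2) : Summable fun m => ‖spreadF w j n x m‖ ^ 2 := by
  rw [← Function.Injective.summable_iff (eInj hn) (spread_supp hn w x)]
  apply Summable.of_nonneg_of_le (fun k => by simp only [Function.comp_apply]; positivity)
    (fun k => ?_) ((summable_sq x).mul_left (C ^ 2))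
  show ‖spreadF w j n x ((fun k : ℕ => j + k * n) k)‖ ^ 2 ≤ C ^ 2 * ‖x k‖ ^ 2
  rw [spreadF_apply hn]
  exact term_bound hw _ k

lemma spread_tsum_le {j n : ℕ} (hn : 0 < n) {C : ℝ} {w : ℕ → ℝ} (hw : ∀ k, |w k| ≤ C)
    (x : H2) : ∑' m, ‖spreadF w j n x m‖ ^ 2 ≤ C ^ 2 * ‖x‖ ^ 2 := by
  have hsupp : Function.support (fun m => ‖spreadF w j n x m‖ ^ 2) ⊆
      Set.range (fun k : ℕ => j + k * n) := by
    intro m hm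
    by_contra hr
    exact hm (spread_supp hn w x m hr)
  rw [← Function.Injective.tsum_eq (eInj hn) hsupp]
  have hs1 : Summable fun k => ‖(w k : ℂ) * x k‖ ^ 2 :=
    Summable.of_nonneg_of_le (fun k => by positivity) (fun k => term_bound hw _ k)
      ((summable_sq x).mul_left _)
  calc ∑' k, ‖spreadF w j n x (j + k * n)‖ ^ 2
      = ∑' k, ‖(w k : ℂ) * x k‖ ^ 2 := tsum_congr fun k => by rw [spreadF_apply hn]
  _ ≤ ∑' k, C ^ 2 * ‖x k‖ ^ 2 :=
      Summable.tsum_le_tsum (fun k => term_bound hw _ k) hs1 ((summable_sq x).mul_left _)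
  _ = C ^ 2 * ∑' k, ‖x k‖ ^ 2 := tsum_mul_left
  _ = C ^ 2 * ‖x‖ ^ 2 := by rw [norm_sq_eq]

def spreadCLM (j : ℕ) {n : ℕ} (hn : 0 < n) {C : ℝ} (hC : 0 ≤ C) {w : ℕ → ℝ}
    (hw : ∀ k, |w k| ≤ C) : H2 →L[ℂ] H2 :=
  LinearMap.mkContinuous
    { toFun := fun x => (⟨spreadF w j n x, memℓp_two (spread_summable hn hw x)⟩ : H2)
      map_add' := by
        intro x y
        apply lp.ext
        funext m
        show spreadF w j n (x + y) m = spreadF w j n x m + spreadF w j n y m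
        simp only [spreadF]
        split
        · rw [lp.coeFn_add]; simp [mul_add]
        · simp
      map_smul' := by
        intro c x
        apply lp.ext
        funext m
        show spreadF w j n (c • x) m = c * spreadF w j n x m
        simp only [spreadF]
        split
        · rw [lp.coeFn_smul]; simp; ring
        · simp }
    C
    (by
      intro x
      apply norm_le_of_sq (by positivity)
      calc ∑' m, ‖spreadF w j n x m‖ ^ 2 ≤ C ^ 2 * ‖x‖ ^ 2 := spread_tsum_le hn hw x
      _ = (C * ‖x‖) ^ 2 := by ring)

lemma spreadCLM_coe (j : ℕ) {n : ℕ} (hn : 0 < n) {C : ℝ} (hC : 0 ≤ C) {w : ℕ → ℝ}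
    (hw : ∀ k, |w k| ≤ C) (x : H2) :
    ((spreadCLM j hn hC hw x : H2) : ℕ → ℂ) = spreadF w j n x := rfl

/-! ### the compress operator -/

def compF (w : ℕ → ℝ) (j n : ℕ) (x : H2) : ℕ → ℂ := fun k => (w k : ℂ) * x (j + k * n)

lemma comp_summable {j n : ℕ} (hn : 0 < n) {C : ℝ} {w : ℕ → ℝ} (hw : ∀ k, |w k| ≤ C)
    (x : H2) : Summable fun k => ‖compF w j n x k‖ ^ 2 := by
  have hs : Summable fun k : ℕ => ‖x (j + k * n)‖ ^ 2 :=
    (summable_sq x).comp_injective (eInj hn)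
  apply Summable.of_nonneg_of_le (fun k => by positivity)
    (fun k => term_bound hw _ k) (hs.mul_left (C ^ 2))

lemma comp_tsum_le {j n : ℕ} (hn : 0 < n) {C : ℝ} {w : ℕ → ℝ} (hw : ∀ k, |w k| ≤ C)
    (x : H2) : ∑' k, ‖compF w j n x k‖ ^ 2 ≤ C ^ 2 * ‖x‖ ^ 2 := by
  have hs : Summable fun k : ℕ => ‖x (j + k * n)‖ ^ 2 :=
    (summable_sq x).comp_injective (eInj hn)
  calc ∑' k, ‖compF w j n x k‖ ^ 2 ≤ ∑' k, C ^ 2 * ‖x (j + k * n)‖ ^ 2 :=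
        Summable.tsum_le_tsum (fun k => term_bound hw _ k) (comp_summable hn hw x)
          (hs.mul_left (C ^ 2))
  _ = C ^ 2 * ∑' k, ‖x (j + k * n)‖ ^ 2 := tsum_mul_left
  _ ≤ C ^ 2 * ∑' m, ‖x m‖ ^ 2 := by
        apply mul_le_mul_of_nonneg_left _ (by positivity)
        exact Summable.tsum_le_tsum_of_inj (fun k : ℕ => j + k * n) (eInj hn)
          (fun c _ => by positivity) (fun k => le_rfl) hs (summable_sq x)
  _ = C ^ 2 * ‖x‖ ^ 2 := by rw [norm_sq_eq]

def compCLM (j : ℕ) {n : ℕ} (hn : 0 < n) {C : ℝ} (hC : 0 ≤ C) {w : ℕ → ℝ}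
    (hw : ∀ k, |w k| ≤ C) : H2 →L[ℂ] H2 :=
  LinearMap.mkContinuous
    { toFun := fun x => (⟨compF w j n x, memℓp_two (comp_summable hn hw x)⟩ : H2)
      map_add' := by
        intro x y
        apply lp.ext
        funext k
        show compF w j n (x + y) k = compF w j n x k + compF w j n y k
        simp only [compF]
        rw [lp.coeFn_add]
        simp [mul_add]
      map_smul' := by
        intro c x
        apply lp.ext
        funext k
        show compF w j n (c • x) k = c * compF w j n x k
        simp only [compF]
        rw [lp.coeFn_smul]
        simp
        ring }
    C
    (by
      intro x
      apply norm_le_of_sq (by positivity)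
      calc ∑' k, ‖compF w j n x k‖ ^ 2 ≤ C ^ 2 * ‖x‖ ^ 2 := comp_tsum_le hn hw x
      _ = (C * ‖x‖) ^ 2 := by ring)

lemma compCLM_coe (j : ℕ) {n : ℕ} (hn : 0 < n) {C : ℝ} (hC : 0 ≤ C) {w : ℕ → ℝ}
    (hw : ∀ k, |w k| ≤ C) (x : H2) :
    ((compCLM j hn hC hw x : H2) : ℕ → ℂ) = compF w j n x := rfl

lemma mod_of {j n : ℕ} (hj : j < n) (k : ℕ) : (j + k * n) % n = j := by
  rw [Nat.add_mul_mod_self_right, Nat.mod_eq_of_lt hj]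

lemma spread_intertwine (hα : GoodWeight α) {Mza : H2 →L[ℂ] H2}
    (hMza : IsMultOp α α (fun z => z) Mza) {n : ℕ} (hn : 0 < n) {j : ℕ} (hj : j < n)
    {c₂ : ℝ} (hc₂ : 0 ≤ c₂)
    (hw : ∀ k, |(fun k => α (j + k * n) / α k) k| ≤ c₂) (x : H2) :
    (Mza ^ n) (spreadCLM j hn hc₂ hw x) = spreadCLM j hn hc₂ hw (Mza x) := by
  have hSx : ∀ (y : H2) (i : ℕ), (spreadCLM j hn hc₂ hw y : ℕ → ℂ) (j + i * n)
      = ((α (j + i * n) / α i : ℝ) : ℂ) * y i := fun y i => by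
    rw [spreadCLM_coe, spreadF_apply hn]
  have hS0 : ∀ (y : H2) (m : ℕ), (¬ ∃ k, m = j + k * n) →
      (spreadCLM j hn hc₂ hw y : ℕ → ℂ) m = 0 := fun y m hm => by
    rw [spreadCLM_coe]
    exact spreadF_zero hn _ y hm
  apply lp.ext
  funext m
  show ((Mza ^ n) (spreadCLM j hn hc₂ hw x)) m = (spreadCLM j hn hc₂ hw (Mza x)) m
  rw [Mza_pow_coeff hα hMza n]
  by_cases hc : ∃ k, m = j + k * n
  · obtain ⟨k, rfl⟩ := hc
    cases k with
    | zero =>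
      rw [hSx (Mza x) 0]
      rw [if_neg (by omega : ¬ n ≤ j + 0 * n)]
      rw [(Mza_coeff hα hMza x).1, mul_zero]
    | succ k =>
      have hge : n ≤ j + (k + 1) * n := by rw [Nat.succ_mul]; omega
      have hsub : j + (k + 1) * n - n = j + k * n := by rw [Nat.succ_mul]; omega
      rw [if_pos hge, hsub, hSx x k, hSx (Mza x) (k + 1), (Mza_coeff hα hMza x).2 k]
      have n1 := alpha_ne hα k
      have n2 := alpha_ne hα (k + 1)
      have n2' := alpha_ne hα (1 + k)
      have n3 := alpha_ne hα (j + k * n)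
      have n4 := alpha_ne hα (j + (k + 1) * n)
      have n4' := alpha_ne hα (j + k * n + n)
      push_cast
      field_simp
  · rw [hS0 (Mza x) m hc]
    split
    · have hmn : ¬ ∃ k, m - n = j + k * n := by
        rename_i hnm
        rintro ⟨k, hk⟩
        exact hc ⟨k + 1, by rw [Nat.succ_mul]; omega⟩
      rw [hS0 x _ hmn, mul_zero]
    · rfl

lemma comp_intertwine (hα : GoodWeight α) {Mza : H2 →L[ℂ] H2}
    (hMza : IsMultOp α α (fun z => z) Mza) {n : ℕ} (hn : 0 < n) {j : ℕ} (hj : j < n)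
    {c₁ : ℝ} (hc₁ : 0 ≤ c₁)
    (hw : ∀ k, |(fun k => α k / α (j + k * n)) k| ≤ c₁) (x : H2) :
    compCLM j hn hc₁ hw ((Mza ^ n) x) = Mza (compCLM j hn hc₁ hw x) := by
  have hV : ∀ (y : H2) (k : ℕ), (compCLM j hn hc₁ hw y : ℕ → ℂ) k
      = ((α k / α (j + k * n) : ℝ) : ℂ) * y (j + k * n) := fun y k => rfl
  apply lp.ext
  funext k
  show (compCLM j hn hc₁ hw ((Mza ^ n) x)) k = (Mza (compCLM j hn hc₁ hw x)) k
  rw [hV]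
  rw [Mza_pow_coeff hα hMza n]
  cases k with
  | zero =>
    rw [if_neg (by omega : ¬ n ≤ j + 0 * n), mul_zero,
      (Mza_coeff hα hMza (compCLM j hn hc₁ hw x)).1]
  | succ k =>
    have hge : n ≤ j + (k + 1) * n := by rw [Nat.succ_mul]; omega
    have hsub : j + (k + 1) * n - n = j + k * n := by rw [Nat.succ_mul]; omega
    rw [if_pos hge, hsub, (Mza_coeff hα hMza (compCLM j hn hc₁ hw x)).2 k, hV x k]
    have n1 := alpha_ne hα k
    have n2 := alpha_ne hα (k + 1)
    have n2' := alpha_ne hα (1 + k)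
    have n3 := alpha_ne hα (j + k * n)
    have n4 := alpha_ne hα (j + (k + 1) * n)
    have n4' := alpha_ne hα (j + k * n + n)
    push_cast
    field_simp

end Aux

theorem stmt_6 (α : ℕ → ℝ) (hα : GoodWeight α) (n : ℕ) (hn : 0 < n)
    (hA : PropertyA α n)
    (Mza : H2 →L[ℂ] H2) (hMza : IsMultOp α α (fun z => z) Mza) :
    (∀ j < n, ∃ X : H2 ≃L[ℂ] resSubspace j n,
      (∀ x : H2, ∀ k : ℕ,
        ((X x : H2)) (j + k * n) = ((α (j + k * n) / α k : ℝ) : ℂ) * x k) ∧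
      ∀ x : H2, (Mza ^ n) ((X x : H2)) = ((X (Mza x) : H2))) ∧
    OpSimilar (Mza ^ n) (dsum n Mza) := by
  obtain ⟨c₁, hc₁, c₂, hc₂, hA⟩ := hA
  have hw1 : ∀ j, j < n → ∀ k, |(fun k => α (j + k * n) / α k) k| ≤ c₂ := by
    intro j hj k
    show |α (j + k * n) / α k| ≤ c₂
    have h1 := hα.1 k
    have h2 := hα.1 (j + k * n)
    rw [abs_of_pos (div_pos h2 h1), div_le_iff₀ h1]
    exact (hA j hj k).2
  have hw2 : ∀ j, j < n → ∀ k, |(fun k => α k / α (j + k * n)) k| ≤ c₁ := by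
    intro j hj k
    show |α k / α (j + k * n)| ≤ c₁
    have h1 := hα.1 k
    have h2 := hα.1 (j + k * n)
    rw [abs_of_pos (div_pos h1 h2), div_le_iff₀ h2]
    exact (hA j hj k).1
  have hcancel : ∀ j i : ℕ,
      ((α i / α (j + i * n) : ℝ) : ℂ) * ((α (j + i * n) / α i : ℝ) : ℂ) = 1 := by
    intro j i
    rw [← Complex.ofReal_mul]
    have h1 := (hα.1 i).ne'
    have h2 := (hα.1 (j + i * n)).ne'
    have : (α i / α (j + i * n)) * (α (j + i * n) / α i) = 1 := by field_simp
    rw [this, Complex.ofReal_one]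
  constructor
  · -- part 1
    intro j hj
    set S := spreadCLM j hn hc₂.le (hw1 j hj) with hSdef
    set T := compCLM j hn hc₁.le (hw2 j hj) with hTdef
    have hSx : ∀ (y : H2) (i : ℕ), (S y : ℕ → ℂ) (j + i * n)
        = ((α (j + i * n) / α i : ℝ) : ℂ) * y i := fun y i => by
      rw [hSdef, spreadCLM_coe, spreadF_apply hn]
    have hS0 : ∀ (y : H2) (m : ℕ), (¬ ∃ k, m = j + k * n) → (S y : ℕ → ℂ) m = 0 :=
      fun y m hm => by
        rw [hSdef, spreadCLM_coe]
        exact spreadF_zero hn _ y hm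
    have hT : ∀ (y : H2) (k : ℕ), (T y : ℕ → ℂ) k
        = ((α k / α (j + k * n) : ℝ) : ℂ) * y (j + k * n) := fun y k => rfl
    have hTS : ∀ x : H2, T (S x) = x := by
      intro x
      apply lp.ext
      funext k
      show (T (S x)) k = x k
      rw [hT, hSx, ← mul_assoc, hcancel, one_mul]
    have hmem : ∀ x : H2, S x ∈ resSubspace j n := by
      intro x m hm
      exact hS0 x m hm
    have hST : ∀ y : H2, y ∈ resSubspace j n → S (T y) = y := by
      intro y hy
      apply lp.ext
      funext m
      show (S (T y)) m = y m
      by_cases hc : ∃ k, m = j + k * n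
      · obtain ⟨k, rfl⟩ := hc
        rw [hSx, hT, ← mul_assoc, mul_comm (((α (j + k * n) / α k : ℝ)) : ℂ), hcancel,
          one_mul]
      · rw [hS0 (T y) m hc, hy m hc]
    refine ⟨ContinuousLinearEquiv.equivOfInverse
      (S.codRestrict (resSubspace j n) hmem)
      (T.comp (resSubspace j n).subtypeL)
      (fun x => hTS x) (fun y => Subtype.ext (hST (y : H2) y.2)), fun x k => ?_, fun x => ?_⟩
    · exact hSx x k
    · exact spread_intertwine hα hMza hn hj hc₂.le (hw1 j hj) x
  · -- part 2
    set Vj : Fin n → (H2 →L[ℂ] H2) := fun j => compCLM (j : ℕ) hn hc₁.le (hw2 j j.2)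
      with hVjdef
    set Sj : Fin n → (H2 →L[ℂ] H2) := fun j => spreadCLM (j : ℕ) hn hc₂.le (hw1 j j.2)
      with hSjdef
    set W : H2 →L[ℂ] PiLp 2 (fun _ : Fin n => H2) :=
      (((PiLp.continuousLinearEquiv 2 ℂ (fun _ : Fin n => H2)).symm :
        (∀ _ : Fin n, H2) →L[ℂ] PiLp 2 (fun _ : Fin n => H2)).comp
        (ContinuousLinearMap.pi Vj)) with hWdef
    set U : PiLp 2 (fun _ : Fin n => H2) →L[ℂ] H2 :=
      ∑ j : Fin n, (Sj j).comp ((ContinuousLinearMap.proj j).comp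
        (((PiLp.continuousLinearEquiv 2 ℂ (fun _ : Fin n => H2)) :
          PiLp 2 (fun _ : Fin n => H2) →L[ℂ] (∀ _ : Fin n, H2)))) with hUdef
    have hWapp : ∀ (x : H2) (j : Fin n), (W x) j = Vj j x := fun x j => rfl
    have hUapp : ∀ f, U f = ∑ j : Fin n, Sj j (f j) := by
      intro f
      rw [hUdef, ContinuousLinearMap.sum_apply]
      rfl
    have hSapp : ∀ (j : Fin n) (y : H2) (i : ℕ),
        (Sj j y : ℕ → ℂ) ((j : ℕ) + i * n)
          = ((α ((j : ℕ) + i * n) / α i : ℝ) : ℂ) * y i := fun j y i => by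
      rw [hSjdef]
      show (spreadCLM (j : ℕ) hn hc₂.le (hw1 j j.2) y : ℕ → ℂ) ((j : ℕ) + i * n) = _
      rw [spreadCLM_coe, spreadF_apply hn]
    have hS0 : ∀ (j : Fin n) (y : H2) (m : ℕ), (¬ ∃ k, m = (j : ℕ) + k * n) →
        (Sj j y : ℕ → ℂ) m = 0 := fun j y m hm => by
      rw [hSjdef]
      show (spreadCLM (j : ℕ) hn hc₂.le (hw1 j j.2) y : ℕ → ℂ) m = 0
      rw [spreadCLM_coe]
      exact spreadF_zero hn _ y hm
    have hVapp : ∀ (j : Fin n) (y : H2) (k : ℕ), (Vj j y : ℕ → ℂ) k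
        = ((α k / α ((j : ℕ) + k * n) : ℝ) : ℂ) * y ((j : ℕ) + k * n) := fun j y k => rfl
    have hmain : ∀ (j : Fin n) (k : ℕ) (x : H2),
        (Sj j (Vj j x) : ℕ → ℂ) ((j : ℕ) + k * n) = x ((j : ℕ) + k * n) := by
      intro j k x
      rw [hSapp, hVapp, ← mul_assoc,
        mul_comm (((α ((j : ℕ) + k * n) / α k : ℝ)) : ℂ), hcancel, one_mul]
    have hUW : ∀ x : H2, U (W x) = x := by
      intro x
      apply lp.ext
      funext m
      show (U (W x)) m = x m
      rw [hUapp, lp.coeFn_sum, Finset.sum_apply]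
      have hj₀ : m % n < n := Nat.mod_lt m hn
      set j₀ : Fin n := ⟨m % n, hj₀⟩ with hj₀def
      have hm0 : m = (j₀ : ℕ) + (m / n) * n := (Nat.mod_add_div' m n).symm
      have hside : ∀ j' : Fin n, j' ∈ Finset.univ → j' ≠ j₀ →
          (Sj j' ((W x) j') : ℕ → ℂ) m = 0 := by
        intro j' _ hne
        apply hS0 j' _ m
        rintro ⟨k, hk⟩
        apply hne
        apply Fin.ext
        show (j' : ℕ) = m % n
        rw [hk, mod_of j'.2 k]
      rw [Finset.sum_eq_single_of_mem j₀ (Finset.mem_univ _) hside, hWapp]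
      calc (Sj j₀ (Vj j₀ x) : ℕ → ℂ) m
          = (Sj j₀ (Vj j₀ x) : ℕ → ℂ) ((j₀ : ℕ) + (m / n) * n) := by rw [← hm0]
      _ = x ((j₀ : ℕ) + (m / n) * n) := hmain j₀ (m / n) x
      _ = x m := by rw [← hm0]
    have hWU : ∀ f, W (U f) = f := by
      intro f
      apply PiLp.ext
      intro j
      apply lp.ext
      funext k
      show (Vj j (U f)) k = (f j) k
      rw [hVapp]
      have hUf : (U f : ℕ → ℂ) ((j : ℕ) + k * n)
          = ∑ j' : Fin n, (Sj j' (f j') : ℕ → ℂ) ((j : ℕ) + k * n) := by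
        rw [hUapp, lp.coeFn_sum, Finset.sum_apply]
      rw [hUf]
      have hside : ∀ j' : Fin n, j' ∈ Finset.univ → j' ≠ j →
          (Sj j' (f j') : ℕ → ℂ) ((j : ℕ) + k * n) = 0 := by
        intro j' _ hne
        apply hS0 j' _ _
        rintro ⟨k', hk'⟩
        apply hne
        apply Fin.ext
        have h1 := mod_of j'.2 k'
        have h2 := mod_of j.2 k
        rw [← hk'] at h1
        rw [h1] at h2
        exact h2
      rw [Finset.sum_eq_single_of_mem j (Finset.mem_univ _) hside, hSapp, ← mul_assoc,
        hcancel, one_mul]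
    have hint : ∀ x : H2, W ((Mza ^ n) x) = dsum n Mza (W x) := by
      intro x
      apply PiLp.ext
      intro j
      show Vj j ((Mza ^ n) x) = (dsum n Mza (W x)) j
      have hd : (dsum n Mza (W x)) j = Mza ((W x) j) := rfl
      rw [hd, hWapp]
      exact comp_intertwine hα hMza hn j.2 hc₁.le (hw2 j j.2) x
    refine ⟨ContinuousLinearEquiv.equivOfInverse W U hUW hWU,
      ContinuousLinearMap.ext fun x => ?_⟩
    show W ((Mza ^ n) x) = dsum n Mza (W x)
    exact hint x


end
end

section
/- Let α be a positive weight sequence with lim_{k→∞} α(k+1)/α(k) = 1 and let n be a positive integer. Then H²_α has property A for n if and only if there exist constants c₁, c₂ > 0 such that c₁ ≤ α(n−1+kn)/α(k) ≤ c₂ for all k ≥ 0. -/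
open Complex Metric Filter ComplexConjugate
open scoped Topology ENNReal

noncomputable section

lemma ratio_bdd (r : ℕ → ℝ) (hr : ∀ k, 0 < r k) (h : Tendsto r atTop (𝓝 1)) :
    ∃ m, 0 < m ∧ m ≤ 1 ∧ ∃ M, 1 ≤ M ∧ ∀ k, m ≤ r k ∧ r k ≤ M := by
  have h1 : ∀ᶠ k in atTop, r k ∈ Set.Icc (1/2 : ℝ) (3/2) :=
    h (Icc_mem_nhds (by norm_num) (by norm_num))
  obtain ⟨N, hN⟩ := eventually_atTop.mp h1
  set S : Finset ℝ := insert (1/2 : ℝ) ((Finset.range N).image r) with hS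
  set T : Finset ℝ := insert (3/2 : ℝ) ((Finset.range N).image r) with hT
  have hSne : S.Nonempty := ⟨1/2, Finset.mem_insert_self _ _⟩
  have hTne : T.Nonempty := ⟨3/2, Finset.mem_insert_self _ _⟩
  refine ⟨S.min' hSne, ?_, ?_, T.max' hTne, ?_, ?_⟩
  · have := S.min'_mem hSne
    simp only [hS, Finset.mem_insert, Finset.mem_image] at this
    rcases this with h' | ⟨k, _, hk⟩
    · rw [h']; norm_num
    · rw [← hk]; exact hr k
  · calc S.min' hSne ≤ 1/2 := Finset.min'_le _ _ (Finset.mem_insert_self _ _)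
      _ ≤ 1 := by norm_num
  · calc (1:ℝ) ≤ 3/2 := by norm_num
      _ ≤ T.max' hTne := Finset.le_max' _ _ (Finset.mem_insert_self _ _)
  · intro k
    by_cases hk : k < N
    · constructor
      · exact Finset.min'_le _ _ (Finset.mem_insert_of_mem
          (Finset.mem_image.mpr ⟨k, Finset.mem_range.mpr hk, rfl⟩))
      · exact Finset.le_max' _ _ (Finset.mem_insert_of_mem
          (Finset.mem_image.mpr ⟨k, Finset.mem_range.mpr hk, rfl⟩))
    · have := hN k (le_of_not_gt hk)
      constructor
      · calc S.min' hSne ≤ 1/2 := Finset.min'_le _ _ (Finset.mem_insert_self _ _)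
          _ ≤ r k := this.1
      · calc r k ≤ 3/2 := this.2
          _ ≤ T.max' hTne := Finset.le_max' _ _ (Finset.mem_insert_self _ _)

lemma tele (α : ℕ → ℝ) (hpos : ∀ k, 0 < α k) (m M : ℝ) (hm : 0 < m)
    (hb : ∀ k, m ≤ α (k + 1) / α k ∧ α (k + 1) / α k ≤ M) :
    ∀ a d : ℕ, α a * m ^ d ≤ α (a + d) ∧ α (a + d) ≤ α a * M ^ d := by
  intro a d
  induction d with
  | zero => simp
  | succ d ih =>
    have hM0 : 0 < M := lt_of_lt_of_le hm (le_trans (hb 0).1 (hb 0).2)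
    have h1 : m * α (a + d) ≤ α (a + d + 1) := by
      have := (hb (a + d)).1
      rw [le_div_iff₀ (hpos (a + d))] at this
      linarith
    have h2 : α (a + d + 1) ≤ M * α (a + d) := by
      have := (hb (a + d)).2
      rw [div_le_iff₀ (hpos (a + d))] at this
      linarith
    have e : a + (d + 1) = a + d + 1 := by ring
    rw [e, pow_succ, pow_succ]
    constructor
    · calc α a * (m ^ d * m) = m * (α a * m ^ d) := by ring
        _ ≤ m * α (a + d) := by nlinarith [ih.1]
        _ ≤ α (a + d + 1) := h1
    · calc α (a + d + 1) ≤ M * α (a + d) := h2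
        _ ≤ M * (α a * M ^ d) := by nlinarith [ih.2]
        _ = α a * (M ^ d * M) := by ring

theorem stmt_7 (α : ℕ → ℝ) (hα : GoodWeight α) (n : ℕ) (hn : 0 < n) :
    PropertyA α n ↔ ∃ c₁ > (0 : ℝ), ∃ c₂ > (0 : ℝ), ∀ k : ℕ,
      c₁ ≤ α (n - 1 + k * n) / α k ∧ α (n - 1 + k * n) / α k ≤ c₂ := by
  obtain ⟨hpos, hlim⟩ := hα
  constructor
  · rintro ⟨c₁, hc₁, c₂, hc₂, h⟩
    refine ⟨1 / c₁, by positivity, c₂, hc₂, fun k => ?_⟩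
    obtain ⟨h1, h2⟩ := h (n - 1) (Nat.sub_lt hn one_pos) k
    constructor
    · rw [le_div_iff₀ (hpos k)]
      rw [div_mul_eq_mul_div, div_le_iff₀ hc₁]
      nlinarith [hpos (n - 1 + k * n)]
    · rw [div_le_iff₀ (hpos k)]
      exact h2
  · rintro ⟨c₁, hc₁, c₂, hc₂, h⟩
    obtain ⟨m, hm0, hm1, M, hM1, hb⟩ :=
      ratio_bdd (fun k => α (k + 1) / α k) (fun k => div_pos (hpos _) (hpos _)) hlim
    have hM0 : (0 : ℝ) < M := lt_of_lt_of_le one_pos hM1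
    refine ⟨M ^ (n - 1) / c₁, by positivity, c₂ / m ^ (n - 1), by positivity,
      fun j hj k => ?_⟩
    have hjn : j ≤ n - 1 := Nat.le_sub_one_of_lt hj
    have e : j + k * n + (n - 1 - j) = n - 1 + k * n := by omega
    obtain ⟨t1, t2⟩ := tele α hpos m M hm0 hb (j + k * n) (n - 1 - j)
    rw [e] at t1 t2
    obtain ⟨r1, r2⟩ := h k
    rw [le_div_iff₀ (hpos k)] at r1
    rw [div_le_iff₀ (hpos k)] at r2
    have hd : n - 1 - j ≤ n - 1 := Nat.sub_le _ _
    have hMd : M ^ (n - 1 - j) ≤ M ^ (n - 1) := pow_le_pow_right₀ hM1 hd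
    have hmd : m ^ (n - 1) ≤ m ^ (n - 1 - j) :=
      pow_le_pow_of_le_one (le_of_lt hm0) hm1 hd
    have hmd0 : (0 : ℝ) < m ^ (n - 1 - j) := by positivity
    have hmn0 : (0 : ℝ) < m ^ (n - 1) := by positivity
    have ha : 0 < α (j + k * n) := hpos _
    constructor
    · rw [div_mul_eq_mul_div, le_div_iff₀ hc₁]
      calc α k * c₁ = c₁ * α k := by ring
        _ ≤ α (n - 1 + k * n) := r1
        _ ≤ α (j + k * n) * M ^ (n - 1 - j) := t2
        _ ≤ M ^ (n - 1) * α (j + k * n) := by nlinarith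
    · have step : α (j + k * n) * m ^ (n - 1) ≤ c₂ * α k := by
        calc α (j + k * n) * m ^ (n - 1) ≤ α (j + k * n) * m ^ (n - 1 - j) := by nlinarith
          _ ≤ α (n - 1 + k * n) := t1
          _ ≤ c₂ * α k := r2
      rw [div_mul_eq_mul_div, le_div_iff₀ hmn0] at *
      linarith

end
end

section
/- Let α be a positive weight sequence with α(0) = 1 and lim_{k→∞} α(k+1)/α(k) = 1, such that the weighted Hardy space H²_α is of polynomial growth, i.e. there exists N ∈ ℕ with (k+1)/(k+N+1) ≤ α(k)/α(k−1) ≤ (k+N+1)/(k+1) for all k ≥ 1. Then for every positive integer n, H²_α has property A for n; in fact n^{−N} ≤ α(n−1+kn)/α(k) ≤ n^N for all k ≥ 0. -/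
open Complex Metric Filter ComplexConjugate
open scoped Topology ENNReal

noncomputable section

/-- Auxiliary weight: `Qfun N m = ∏_{i<N} (m+i+2)`. -/
def Qfun (N m : ℕ) : ℝ := ∏ i ∈ Finset.range N, ((m : ℝ) + i + 2)

lemma Qfun_pos (N m : ℕ) : 0 < Qfun N m := by
  apply Finset.prod_pos; intro i _; positivity

lemma Qfun_succ (N m : ℕ) :
    Qfun N (m + 1) * ((m : ℝ) + 2) = Qfun N m * ((m : ℝ) + N + 2) := by
  have h : ∀ M : ℕ,
      (∏ i ∈ Finset.range M, ((m : ℝ) + 1 + i + 2)) * ((m : ℝ) + 2) =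
      (∏ i ∈ Finset.range M, ((m : ℝ) + i + 2)) * ((m : ℝ) + M + 2) := by
    intro M
    induction M with
    | zero => simp
    | succ M ih =>
      rw [Finset.prod_range_succ, Finset.prod_range_succ]
      push_cast at ih ⊢
      nlinarith [ih]
  have hc : Qfun N (m + 1) = ∏ i ∈ Finset.range N, ((m : ℝ) + 1 + i + 2) := by
    unfold Qfun
    apply Finset.prod_congr rfl
    intro i _
    push_cast
    ring
  rw [hc, h N]
  rfl

lemma Qfun_mono (N : ℕ) {k m : ℕ} (hkm : k ≤ m) : Qfun N k ≤ Qfun N m := by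
  apply Finset.prod_le_prod
  · intro i _; positivity
  · intro i _
    have : (k : ℝ) ≤ m := by exact_mod_cast hkm
    linarith

lemma Qfun_mul_bound (N n j k : ℕ) (hn : 0 < n) (hj : j < n) :
    Qfun N (j + k * n) ≤ (n : ℝ) ^ N * Qfun N k := by
  have hrw : (n : ℝ) ^ N * Qfun N k
      = ∏ i ∈ Finset.range N, ((n : ℝ) * ((k : ℝ) + i + 2)) := by
    rw [Finset.prod_mul_distrib, Finset.prod_const, Finset.card_range]
    rfl
  rw [hrw]
  apply Finset.prod_le_prod
  · intro i _; positivity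
  · intro i _
    have hn1 : (1 : ℝ) ≤ n := by exact_mod_cast hn
    have hj1 : (j : ℝ) ≤ (n : ℝ) - 1 := by
      have : (j : ℝ) + 1 ≤ n := by exact_mod_cast hj
      linarith
    have hi0 : (0 : ℝ) ≤ (i : ℝ) := Nat.cast_nonneg i
    push_cast
    nlinarith [mul_nonneg (sub_nonneg.mpr hn1) hi0]

theorem stmt_9 (α : ℕ → ℝ) (hpos : ∀ k, 0 < α k) (h0 : α 0 = 1)
    (hαlim : Tendsto (fun k => α (k + 1) / α k) atTop (𝓝 1))
    (N : ℕ)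
    (hgrow : ∀ k : ℕ, 1 ≤ k →
      ((k : ℝ) + 1) / ((k : ℝ) + N + 1) ≤ α k / α (k - 1) ∧
        α k / α (k - 1) ≤ ((k : ℝ) + N + 1) / ((k : ℝ) + 1))
    (n : ℕ) (hn : 0 < n) :
    PropertyA α n ∧
      ∀ k : ℕ, ((n : ℝ) ^ N)⁻¹ ≤ α (n - 1 + k * n) / α k ∧
        α (n - 1 + k * n) / α k ≤ (n : ℝ) ^ N := by
  have hnN : (0 : ℝ) < (n : ℝ) ^ N := by positivity
  -- ratio bounds in product form
  have ratio_ub : ∀ m : ℕ, α (m + 1) * ((m : ℝ) + 2) ≤ α m * ((m : ℝ) + N + 2) := by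
    intro m
    have h := (hgrow (m + 1) (by omega)).2
    simp only [Nat.add_sub_cancel] at h
    have hq : (0 : ℝ) < ((m + 1 : ℕ) : ℝ) + 1 := by positivity
    rw [div_le_div_iff₀ (hpos m) hq] at h
    push_cast at h ⊢
    nlinarith [h]
  have ratio_lb : ∀ m : ℕ, α m * ((m : ℝ) + 2) ≤ α (m + 1) * ((m : ℝ) + N + 2) := by
    intro m
    have h := (hgrow (m + 1) (by omega)).1
    simp only [Nat.add_sub_cancel] at h
    have hq : (0 : ℝ) < ((m + 1 : ℕ) : ℝ) + ↑N + 1 := by positivity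
    rw [div_le_div_iff₀ hq (hpos m)] at h
    push_cast at h ⊢
    nlinarith [h]
  -- monotonicity of α m / Q m and α m * Q m
  have upperMono : ∀ k m : ℕ, k ≤ m → α m * Qfun N k ≤ α k * Qfun N m := by
    intro k m hkm
    induction m, hkm using Nat.le_induction with
    | base => exact le_refl _
    | succ m hkm ih =>
      have hm2 : (0 : ℝ) < (m : ℝ) + 2 := by positivity
      have key := Qfun_succ N m
      have hQk := (Qfun_pos N k).le
      apply le_of_mul_le_mul_right _ hm2
      calc α (m + 1) * Qfun N k * ((m : ℝ) + 2)
          = (α (m + 1) * ((m : ℝ) + 2)) * Qfun N k := by ring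
        _ ≤ (α m * ((m : ℝ) + N + 2)) * Qfun N k :=
            mul_le_mul_of_nonneg_right (ratio_ub m) hQk
        _ = (α m * Qfun N k) * ((m : ℝ) + N + 2) := by ring
        _ ≤ (α k * Qfun N m) * ((m : ℝ) + N + 2) :=
            mul_le_mul_of_nonneg_right ih (by positivity)
        _ = α k * (Qfun N m * ((m : ℝ) + N + 2)) := by ring
        _ = α k * (Qfun N (m + 1) * ((m : ℝ) + 2)) := by rw [key]
        _ = α k * Qfun N (m + 1) * ((m : ℝ) + 2) := by ring
  have lowerMono : ∀ k m : ℕ, k ≤ m → α k * Qfun N k ≤ α m * Qfun N m := by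
    intro k m hkm
    induction m, hkm using Nat.le_induction with
    | base => exact le_refl _
    | succ m hkm ih =>
      have hm2 : (0 : ℝ) < (m : ℝ) + 2 := by positivity
      have key := Qfun_succ N m
      apply le_of_mul_le_mul_right _ hm2
      calc α k * Qfun N k * ((m : ℝ) + 2)
          ≤ α m * Qfun N m * ((m : ℝ) + 2) :=
            mul_le_mul_of_nonneg_right ih hm2.le
        _ = (α m * ((m : ℝ) + 2)) * Qfun N m := by ring
        _ ≤ (α (m + 1) * ((m : ℝ) + N + 2)) * Qfun N m := by
            have := ratio_lb m
            nlinarith [(Qfun_pos N m).le, ratio_lb m]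
        _ = α (m + 1) * (Qfun N m * ((m : ℝ) + N + 2)) := by ring
        _ = α (m + 1) * (Qfun N (m + 1) * ((m : ℝ) + 2)) := by rw [key]
        _ = α (m + 1) * Qfun N (m + 1) * ((m : ℝ) + 2) := by ring
  -- main two-sided bound
  have main : ∀ j k : ℕ, j < n →
      α k ≤ (n : ℝ) ^ N * α (j + k * n) ∧
      α (j + k * n) ≤ (n : ℝ) ^ N * α k := by
    intro j k hj
    set m := j + k * n with hm
    have hkm : k ≤ m := by
      have : k ≤ k * n := Nat.le_mul_of_pos_right k hn
      omega
    have hQb := Qfun_mul_bound N n j k hn hj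
    have hQkpos := Qfun_pos N k
    constructor
    · -- α k ≤ n^N * α m, from lowerMono
      have h1 := lowerMono k m hkm
      have h2 : α m * Qfun N m ≤ α m * ((n : ℝ) ^ N * Qfun N k) :=
        mul_le_mul_of_nonneg_left hQb (hpos m).le
      have h3 : α k * Qfun N k ≤ (n : ℝ) ^ N * α m * Qfun N k := by nlinarith
      exact le_of_mul_le_mul_right h3 hQkpos
    · -- α m ≤ n^N * α k, from upperMono
      have h1 := upperMono k m hkm
      have h2 : α k * Qfun N m ≤ α k * ((n : ℝ) ^ N * Qfun N k) :=
        mul_le_mul_of_nonneg_left hQb (hpos k).le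
      have h3 : α m * Qfun N k ≤ (n : ℝ) ^ N * α k * Qfun N k := by nlinarith
      exact le_of_mul_le_mul_right h3 hQkpos
  constructor
  · exact ⟨(n : ℝ) ^ N, hnN, (n : ℝ) ^ N, hnN, fun j hj k => main j k hj⟩
  · intro k
    have h := main (n - 1) k (by omega)
    constructor
    · rw [le_div_iff₀ (hpos k), inv_mul_le_iff₀ hnN]
      linarith [h.1]
    · rw [div_le_iff₀ (hpos k)]
      linarith [h.2]

end
end
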